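/- There exists a group homomorphism h from the presented group G = ⟨β, γ | β⁵ = γ⁷ = (βγ)² = 1⟩ to the isometry group of the hyperbolic upper half-plane (UpperHalfPlane ≃ᵢ UpperHalfPlane) such that h(β) has order 5, h(γ) has order 7, and h(βγ) has order 2; in particular the image of h is nontrivial. -/

import Mathlib

/-- The generator `b` of the free group on two generators. -/
def b : FreeGroup (Fin 2) := FreeGroup.of 0

/-- The generator `c` of the free group on two generators. -/
def c : FreeGroup (Fin 2) := FreeGroup.of 1

/-- The relators `β⁵, γ⁷, (βγ)²` of the (7,5,2)-triangle-type presentation. -/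
def rels : Set (FreeGroup (Fin 2)) := {b ^ 5, c ^ 7, (b * c) ^ 2}

open Real Matrix UpperHalfPlane
noncomputable section TA
abbrev SL2R := Matrix.SpecialLinearGroup (Fin 2) ℝ

def kk : ℝ := (Real.cos (π/5) * Real.cos (π/7)) / (Real.sin (π/5) * Real.sin (π/7))

lemma sin5_pos : 0 < Real.sin (π/5) := Real.sin_pos_of_pos_of_lt_pi (by positivity) (by linarith [Real.pi_pos])
lemma sin7_pos : 0 < Real.sin (π/7) := Real.sin_pos_of_pos_of_lt_pi (by positivity) (by linarith [Real.pi_pos])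
lemma cos5_pos : 0 < Real.cos (π/5) := Real.cos_pos_of_mem_Ioo ⟨by linarith [Real.pi_pos], by linarith [Real.pi_pos]⟩
lemma cos7_pos : 0 < Real.cos (π/7) := Real.cos_pos_of_mem_Ioo ⟨by linarith [Real.pi_pos], by linarith [Real.pi_pos]⟩

lemma kk_gt_one : 1 < kk := by
  have h := Real.cos_pos_of_mem_Ioo (show π/5 + π/7 ∈ Set.Ioo (-(π/2)) (π/2) from
    ⟨by linarith [Real.pi_pos], by linarith [Real.pi_pos]⟩)
  rw [Real.cos_add] at h
  rw [kk, lt_div_iff₀ (mul_pos sin5_pos sin7_pos)]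
  linarith

def uu : ℝ := kk + Real.sqrt (kk^2 - 1)

lemma uu_gt_one : 1 < uu := by
  have := Real.sqrt_nonneg (kk^2 - 1)
  have := kk_gt_one
  unfold uu; linarith

lemma uu_pos : 0 < uu := by linarith [uu_gt_one]

lemma uu_inv : uu⁻¹ = kk - Real.sqrt (kk^2 - 1) := by
  have h1 : kk^2 - 1 ≥ 0 := by nlinarith [kk_gt_one]
  have h2 : uu * (kk - Real.sqrt (kk^2 - 1)) = 1 := by
    have := Real.sq_sqrt h1
    unfold uu; nlinarith
  field_simp [uu_pos.ne'] at h2 ⊢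
  linarith [h2]

lemma uu_add_inv : uu + uu⁻¹ = 2 * kk := by
  rw [uu_inv]; unfold uu; ring

lemma kk_mul : kk * (Real.sin (π/5) * Real.sin (π/7)) = Real.cos (π/5) * Real.cos (π/7) :=
  div_mul_cancel₀ _ (mul_pos sin5_pos sin7_pos).ne'

def Rot (θ : ℝ) : SL2R :=
  ⟨!![Real.cos θ, Real.sin θ; -Real.sin θ, Real.cos θ], by
    rw [Matrix.det_fin_two_of]; nlinarith [Real.sin_sq_add_cos_sq θ]⟩

lemma Rot_mul (θ ψ : ℝ) : Rot θ * Rot ψ = Rot (θ + ψ) := by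
  apply Subtype.ext
  show (Rot θ : Matrix (Fin 2) (Fin 2) ℝ) * (Rot ψ) = _
  simp only [Rot, Matrix.mul_fin_two]
  rw [Real.cos_add, Real.sin_add]
  congr 1 <;> ring

lemma Rot_pi : Rot π = -1 := by
  apply Subtype.ext
  show (Rot π : Matrix (Fin 2) (Fin 2) ℝ) = -1
  ext i j
  fin_cases i <;> fin_cases j <;> simp [Rot]

def A : SL2R := Rot (π/5)

lemma A_pow : A ^ 5 = -1 := by
  rw [A, show (5:ℕ) = 5 from rfl, pow_succ, pow_succ, pow_succ, pow_succ, pow_one,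
    Rot_mul, Rot_mul, Rot_mul, Rot_mul,
    show π/5 + π/5 + π/5 + π/5 + π/5 = π by ring, Rot_pi]

def B : SL2R :=
  ⟨!![Real.cos (π/7), uu * Real.sin (π/7); -(uu⁻¹ * Real.sin (π/7)), Real.cos (π/7)], by
    rw [Matrix.det_fin_two_of]
    have h : uu * Real.sin (π/7) * (uu⁻¹ * Real.sin (π/7))
        = Real.sin (π/7) ^ 2 := by
      field_simp [uu_pos.ne']
    nlinarith [Real.sin_sq_add_cos_sq (π/7)]⟩

lemma sqrt_uu_pos : 0 < Real.sqrt uu := Real.sqrt_pos.mpr uu_pos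

def D : SL2R :=
  ⟨!![Real.sqrt uu, 0; 0, (Real.sqrt uu)⁻¹], by
    rw [Matrix.det_fin_two_of]
    field_simp [sqrt_uu_pos.ne']
    norm_num⟩

lemma sqrt_uu_sq : Real.sqrt uu * Real.sqrt uu = uu :=
  Real.mul_self_sqrt uu_pos.le

lemma B_conj : B * D = D * Rot (π/7) := by
  apply Subtype.ext
  show (B : Matrix (Fin 2) (Fin 2) ℝ) * D = (D : Matrix (Fin 2) (Fin 2) ℝ) * _
  simp only [B, D, Rot, Matrix.mul_fin_two]
  ext i j
  fin_cases i <;> fin_cases j <;>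
    · simp
      try rw [← sqrt_uu_sq]
      try field_simp [sqrt_uu_pos.ne']
      try ring
      try (simp only [Real.sq_sqrt uu_pos.le, Real.sq_sqrt (Real.sqrt_nonneg uu)]; try ring)

lemma B_pow : B ^ 7 = -1 := by
  have hB : B = D * Rot (π/7) * D⁻¹ := by
    rw [← B_conj]; group
  rw [hB, conj_pow]
  have h7 : Rot (π/7) ^ 7 = Rot π := by
    rw [show (7:ℕ) = 7 from rfl, pow_succ, pow_succ, pow_succ, pow_succ, pow_succ, pow_succ,
      pow_one, Rot_mul, Rot_mul, Rot_mul, Rot_mul, Rot_mul, Rot_mul,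
      show π/7+π/7+π/7+π/7+π/7+π/7+π/7 = π by ring]
  rw [h7, Rot_pi]
  simp [mul_comm]

lemma sq_neg_one (M : SL2R) (h : (M : Matrix (Fin 2) (Fin 2) ℝ) 0 0 + (M : Matrix (Fin 2) (Fin 2) ℝ) 1 1 = 0) :
    M * M = -1 := by
  have hdet := M.prop
  rw [Matrix.det_fin_two] at hdet
  have h11 : (M : Matrix (Fin 2) (Fin 2) ℝ) 1 1 = -((M : Matrix (Fin 2) (Fin 2) ℝ) 0 0) := by
    linarith
  rw [h11] at hdet
  apply Subtype.ext
  show (M : Matrix (Fin 2) (Fin 2) ℝ) * M = -1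
  ext i j
  fin_cases i <;> fin_cases j <;>
    · simp [Matrix.mul_apply, Fin.sum_univ_two, h11]
      try nlinarith [hdet]

lemma AB_coe : ((A * B : SL2R) : Matrix (Fin 2) (Fin 2) ℝ) =
    !![Real.cos (π/5) * Real.cos (π/7) - Real.sin (π/5) * (uu⁻¹ * Real.sin (π/7)),
       Real.cos (π/5) * (uu * Real.sin (π/7)) + Real.sin (π/5) * Real.cos (π/7);
       -(Real.sin (π/5) * Real.cos (π/7)) - Real.cos (π/5) * (uu⁻¹ * Real.sin (π/7)),
       Real.cos (π/5) * Real.cos (π/7) - Real.sin (π/5) * (uu * Real.sin (π/7))] := by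
  show (A : Matrix (Fin 2) (Fin 2) ℝ) * B = _
  simp only [A, Rot, B, Matrix.mul_fin_two]
  ext i j
  fin_cases i <;> fin_cases j <;>
    · simp
      try ring

lemma AB_trace : ((A * B : SL2R) : Matrix (Fin 2) (Fin 2) ℝ) 0 0
    + ((A * B : SL2R) : Matrix (Fin 2) (Fin 2) ℝ) 1 1 = 0 := by
  rw [AB_coe]
  have h1 := kk_mul
  have h2 := uu_add_inv
  simp only [Matrix.cons_val_zero, Matrix.cons_val_one, Matrix.head_cons, Matrix.head_fin_const,
    Matrix.cons_val', Matrix.of_apply, Matrix.empty_val', Matrix.cons_val_fin_one]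
  linear_combination (-2 : ℝ) * h1 - Real.sin (π/5) * Real.sin (π/7) * h2

lemma AB_sq : (A * B) * (A * B) = (-1 : SL2R) := sq_neg_one _ AB_trace

def φ : SL2R →* (ℍ ≃ᵢ ℍ) where
  toFun g := IsometryEquiv.constSMul g
  map_one' := IsometryEquiv.ext fun z => one_smul SL2R z
  map_mul' g h := IsometryEquiv.ext fun z => mul_smul g h z

lemma φ_apply (g : SL2R) (z : ℍ) : φ g z = g • z := rfl

lemma neg_one_smul' (z : ℍ) : ((-1 : SL2R)) • z = z := by
  apply UpperHalfPlane.ext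
  rw [specialLinearGroup_apply]
  simp

lemma φ_neg_one : φ (-1) = 1 := IsometryEquiv.ext fun z => neg_one_smul' z

def pt2 : ℍ := UpperHalfPlane.mk (2*Complex.I) (by simp)

lemma simp_entries : True := trivial

lemma A_ne : φ A ≠ 1 := by
  intro h
  have h2 : A • pt2 = pt2 := by
    have := congrArg (fun e : ℍ ≃ᵢ ℍ => e pt2) h
    simpa [φ_apply] using this
  rw [specialLinearGroup_apply, UpperHalfPlane.ext_iff] at h2
  simp only [A, Rot, Algebra.algebraMap_self_apply, UpperHalfPlane.coe_mk, pt2,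
    Matrix.cons_val_zero, Matrix.cons_val_one, Matrix.head_cons, Matrix.head_fin_const,
    Matrix.cons_val', Matrix.of_apply, Matrix.empty_val', Matrix.cons_val_fin_one] at h2
  have hden : ((-Real.sin (π/5) : ℝ) : ℂ) * (2*Complex.I) + (Real.cos (π/5) : ℝ) ≠ 0 := by
    intro h0
    have h1 := congrArg Complex.re h0
    simp only [Complex.add_re, Complex.mul_re, Complex.mul_im, Complex.add_im,
      Complex.ofReal_re, Complex.ofReal_im, Complex.I_re, Complex.I_im,
      Complex.re_ofNat, Complex.im_ofNat, Complex.zero_re] at h1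
    norm_num at h1
    nlinarith [Real.sqrt_nonneg (5:ℝ), h1]
  rw [div_eq_iff hden] at h2
  have h4 := congrArg Complex.re h2
  simp only [Complex.add_re, Complex.mul_re, Complex.mul_im, Complex.add_im,
    Complex.ofReal_re, Complex.ofReal_im, Complex.I_re, Complex.I_im,
    Complex.re_ofNat, Complex.im_ofNat] at h4
  norm_num at h4
  linarith [sin5_pos, h4]

lemma uu_inv_lt_one : uu⁻¹ < 1 := by
  rw [inv_lt_one_iff₀]; right; exact uu_gt_one

lemma uu_inv_pos : 0 < uu⁻¹ := inv_pos.mpr uu_pos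

lemma B_ne : φ B ≠ 1 := by
  intro h
  have h2 : B • UpperHalfPlane.I = UpperHalfPlane.I := by
    have := congrArg (fun e : ℍ ≃ᵢ ℍ => e UpperHalfPlane.I) h
    simpa [φ_apply] using this
  rw [specialLinearGroup_apply, UpperHalfPlane.ext_iff] at h2
  simp only [B, Algebra.algebraMap_self_apply, UpperHalfPlane.coe_mk, UpperHalfPlane.coe_I,
    Matrix.cons_val_zero, Matrix.cons_val_one, Matrix.head_cons, Matrix.head_fin_const,
    Matrix.cons_val', Matrix.of_apply, Matrix.empty_val', Matrix.cons_val_fin_one] at h2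
  have hden : ((-(uu⁻¹ * Real.sin (π/7)) : ℝ) : ℂ) * Complex.I + (Real.cos (π/7) : ℝ) ≠ 0 := by
    intro h0
    have h1 := congrArg Complex.re h0
    simp only [Complex.add_re, Complex.mul_re, Complex.mul_im, Complex.add_im,
      Complex.ofReal_re, Complex.ofReal_im, Complex.I_re, Complex.I_im,
      Complex.zero_re] at h1
    norm_num at h1
    exact cos7_pos.ne' h1
  rw [div_eq_iff hden] at h2
  have h4 := congrArg Complex.re h2
  simp only [Complex.add_re, Complex.mul_re, Complex.mul_im, Complex.add_im,
    Complex.ofReal_re, Complex.ofReal_im, Complex.I_re, Complex.I_im] at h4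
  norm_num at h4
  rcases h4 with h4 | h4
  · nlinarith [uu_gt_one, uu_inv_lt_one]
  · exact sin7_pos.ne' h4

lemma AB_ne : φ (A * B) ≠ 1 := by
  intro h
  have h2 : (A * B) • UpperHalfPlane.I = UpperHalfPlane.I := by
    have := congrArg (fun e : ℍ ≃ᵢ ℍ => e UpperHalfPlane.I) h
    rw [mul_smul]
    simpa [φ_apply] using this
  rw [specialLinearGroup_apply, UpperHalfPlane.ext_iff] at h2
  simp only [AB_coe, Algebra.algebraMap_self_apply, UpperHalfPlane.coe_mk, UpperHalfPlane.coe_I,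
    Matrix.cons_val_zero, Matrix.cons_val_one, Matrix.head_cons, Matrix.head_fin_const,
    Matrix.cons_val', Matrix.of_apply, Matrix.empty_val', Matrix.cons_val_fin_one] at h2
  set p10 : ℝ := -(Real.sin (π/5) * Real.cos (π/7)) - Real.cos (π/5) * (uu⁻¹ * Real.sin (π/7)) with hp10
  set p11 : ℝ := Real.cos (π/5) * Real.cos (π/7) - Real.sin (π/5) * (uu * Real.sin (π/7)) with hp11
  have hden : ((p10 : ℝ) : ℂ) * Complex.I + ((p11 : ℝ) : ℂ) ≠ 0 := by
    intro h0
    have h1 := congrArg Complex.im h0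
    simp only [Complex.add_im, Complex.mul_re, Complex.mul_im, Complex.add_re,
      Complex.ofReal_re, Complex.ofReal_im, Complex.I_re, Complex.I_im,
      Complex.zero_im] at h1
    norm_num at h1
    rw [hp10] at h1
    nlinarith [sin5_pos, cos7_pos, cos5_pos, sin7_pos, uu_inv_pos,
      mul_pos sin5_pos cos7_pos, mul_pos (mul_pos cos5_pos uu_inv_pos) sin7_pos]
  rw [div_eq_iff hden] at h2
  have h4 := congrArg Complex.re h2
  simp only [Complex.add_re, Complex.mul_re, Complex.mul_im, Complex.add_im,
    Complex.ofReal_re, Complex.ofReal_im, Complex.I_re, Complex.I_im] at h4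
  norm_num [-Real.cos_pi_div_five] at h4
  rw [hp10] at h4
  nlinarith [h4, mul_pos cos5_pos sin7_pos, uu_gt_one, uu_inv_lt_one,
    mul_pos (sub_pos.mpr uu_gt_one) (mul_pos cos5_pos sin7_pos),
    mul_pos (sub_pos.mpr uu_inv_lt_one) (mul_pos cos5_pos sin7_pos)]
end TA



/-- Section 2.1: the presented group `G = ⟨β, γ ∣ β⁵ = γ⁷ = (βγ)² = 1⟩` maps to the
isometry group of the hyperbolic plane by a homomorphism `h` with `h β` of order 5,
`h γ` of order 7 and `h (βγ)` of order 2; in particular the image of `h` is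
nontrivial. -/
theorem exists_hom_to_hyperbolic_isometries :
    ∃ h : PresentedGroup rels →* (UpperHalfPlane ≃ᵢ UpperHalfPlane),
      orderOf (h (PresentedGroup.mk rels b)) = 5 ∧
      orderOf (h (PresentedGroup.mk rels c)) = 7 ∧
      orderOf (h (PresentedGroup.mk rels (b * c))) = 2 ∧
      ∃ g : PresentedGroup rels, h g ≠ 1 := by
  haveI : Fact (Nat.Prime 5) := ⟨by norm_num⟩
  haveI : Fact (Nat.Prime 7) := ⟨by norm_num⟩
  haveI : Fact (Nat.Prime 2) := ⟨by norm_num⟩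
  have hf0 : (FreeGroup.lift ![φ A, φ B]) b = φ A := by
    rw [b, FreeGroup.lift_apply_of]; rfl
  have hf1 : (FreeGroup.lift ![φ A, φ B]) c = φ B := by
    rw [c, FreeGroup.lift_apply_of]; rfl
  have hrels : ∀ r ∈ rels, (FreeGroup.lift ![φ A, φ B]) r = 1 := by
    intro r hr
    simp only [rels, Set.mem_insert_iff, Set.mem_singleton_iff] at hr
    rcases hr with rfl | rfl | rfl
    · rw [map_pow, hf0, ← map_pow, A_pow, φ_neg_one]
    · rw [map_pow, hf1, ← map_pow, B_pow, φ_neg_one]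
    · rw [map_pow, _root_.map_mul, hf0, hf1, ← _root_.map_mul, pow_two, ← _root_.map_mul, AB_sq, φ_neg_one]
  refine ⟨PresentedGroup.toGroup hrels, ?_, ?_, ?_, ?_⟩
  · have hb : PresentedGroup.toGroup hrels (PresentedGroup.mk rels b) = φ A := by
      rw [show PresentedGroup.mk rels b = PresentedGroup.of (rels := rels) 0 from rfl,
        PresentedGroup.toGroup.of]; rfl
    rw [hb]
    refine orderOf_eq_prime ?_ A_ne
    rw [← map_pow, A_pow, φ_neg_one]
  · have hc : PresentedGroup.toGroup hrels (PresentedGroup.mk rels c) = φ B := by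
      rw [show PresentedGroup.mk rels c = PresentedGroup.of (rels := rels) 1 from rfl,
        PresentedGroup.toGroup.of]; rfl
    rw [hc]
    refine orderOf_eq_prime ?_ B_ne
    rw [← map_pow, B_pow, φ_neg_one]
  · have hbc : PresentedGroup.toGroup hrels (PresentedGroup.mk rels (b * c)) = φ (A * B) := by
      rw [_root_.map_mul, _root_.map_mul,
        show PresentedGroup.mk rels b = PresentedGroup.of (rels := rels) 0 from rfl,
        show PresentedGroup.mk rels c = PresentedGroup.of (rels := rels) 1 from rfl,
        PresentedGroup.toGroup.of, PresentedGroup.toGroup.of, _root_.map_mul]; rfl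
    rw [hbc]
    refine orderOf_eq_prime ?_ AB_ne
    rw [← map_pow, pow_two, AB_sq, φ_neg_one]
  · refine ⟨PresentedGroup.mk rels b, ?_⟩
    rw [show PresentedGroup.mk rels b = PresentedGroup.of (rels := rels) 0 from rfl,
      PresentedGroup.toGroup.of]
    exact A_ne
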